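/- Let n ≥ 3 be an integer with n ≢ 2 (mod 4) and prime factorization n = p₁^{e₁} ⋯ p_s^{e_s}. Let ζ_n be a primitive n-th root of unity in the cyclotomic field ℚ(ζ_n), for each proper subset I ⊊ {1,…,s} set n_I = ∏_{i∈I} p_i^{e_i}, and define ξ_n := ∏_{I ⊊ {1,…,s}} (1 − ζ_n^{n_I})(1 − ζ_n^{−n_I}). Then (a) ξ_n is totally positive, i.e. every embedding of ℚ(ζ_n) into ℂ sends ξ_n to a positive real number, and (b) for every σ in the Galois group Gal(ℚ(ζ_n)/ℚ), the element σ(ξ_n)/ξ_n is a totally positive unit of the ring of integers of ℚ(ζ_n). -/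

import Mathlib

/-- An element of a number field is *totally positive* if its image under every embedding into
`ℂ` is a positive real number. -/
def TotallyPositiveElt {E : Type*} [Field E] (x : E) : Prop :=
  ∀ φ : E →+* ℂ, ∃ r : ℝ, 0 < r ∧ φ x = (r : ℂ)

/-- For a proper subset `I` of the prime factors of `N ≠ 0`, the partial product
`∏_{p ∈ I} p^{v_p(N)}` is positive and strictly less than `N`. -/
lemma aux_nI_pos_lt {N : ℕ} (hN : N ≠ 0) {I : Finset ℕ}
    (hIS : I ⊆ N.primeFactors) (hIne : I ≠ N.primeFactors) :
    0 < ∏ p ∈ I, p ^ N.factorization p ∧ (∏ p ∈ I, p ^ N.factorization p) < N := by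
  have hpos : 0 < ∏ p ∈ I, p ^ N.factorization p :=
    Finset.prod_pos fun p hp => pow_pos (Nat.pos_of_mem_primeFactors (hIS hp)) _
  refine ⟨hpos, ?_⟩
  have hfull : ∏ p ∈ N.primeFactors, p ^ N.factorization p = N :=
    Nat.factorization_prod_pow_eq_self hN
  have hsplit : (∏ p ∈ N.primeFactors \ I, p ^ N.factorization p) *
      ∏ p ∈ I, p ^ N.factorization p = N := by
    rw [Finset.prod_sdiff hIS, hfull]
  obtain ⟨q, hq⟩ : (N.primeFactors \ I).Nonempty := by
    rw [Finset.sdiff_nonempty]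
    exact fun h => hIne (Finset.Subset.antisymm hIS h)
  have hq1 : q ∈ N.primeFactors := (Finset.mem_sdiff.mp hq).1
  have hq2 : 2 ≤ q ^ N.factorization q := by
    calc 2 ≤ q := (Nat.prime_of_mem_primeFactors hq1).two_le
    _ = q ^ 1 := (pow_one q).symm
    _ ≤ q ^ N.factorization q := Nat.pow_le_pow_right
        (Nat.pos_of_mem_primeFactors hq1)
        (Nat.Prime.factorization_pos_of_dvd (Nat.prime_of_mem_primeFactors hq1) hN
          (Nat.dvd_of_mem_primeFactors hq1))
  have hc2 : 2 ≤ ∏ p ∈ N.primeFactors \ I, p ^ N.factorization p :=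
    le_trans hq2 (Finset.single_le_prod' (f := fun p => p ^ N.factorization p)
      (fun p hp => pow_pos (Nat.pos_of_mem_primeFactors (Finset.mem_sdiff.mp hp).1) _) hq)
  calc (∏ p ∈ I, p ^ N.factorization p)
      = 1 * ∏ p ∈ I, p ^ N.factorization p := (one_mul _).symm
    _ < (∏ p ∈ N.primeFactors \ I, p ^ N.factorization p) *
        ∏ p ∈ I, p ^ N.factorization p :=
        Nat.mul_lt_mul_of_lt_of_le (lt_of_lt_of_le one_lt_two hc2) le_rfl hpos
    _ = N := hsplit

/-- with `n ≥ 3`, `n ≢ 2 (mod 4)`, `ζ` a primitive `n`-th root of unity in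
the `n`-th cyclotomic field `E = ℚ(ζₙ)`, and
`ξ = ∏_{I ⊊ primeFactors(n)} (1 - ζ^{n_I})(1 - ζ^{-n_I})` where `n_I = ∏_{p ∈ I} p^{v_p(n)}`,
the element `ξ` is totally positive, and for every `σ ∈ Gal(E/ℚ)` the element `σ(ξ)/ξ` is a
totally positive unit of the ring of integers of `E`. -/
theorem cyclotomic_xi_totally_positive (n : ℕ+) (hn3 : 3 ≤ (n : ℕ)) (hn4 : (n : ℕ) % 4 ≠ 2)
    (E : Type*) [Field E] [Algebra ℚ E] [IsCyclotomicExtension {(n : ℕ)} ℚ E]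
    (ζ : E) (hζ : IsPrimitiveRoot ζ (n : ℕ))
    (ξ : E)
    (hξ : ξ = ∏ I ∈ (n : ℕ).primeFactors.powerset.filter (· ≠ (n : ℕ).primeFactors),
      (1 - ζ ^ (∏ p ∈ I, p ^ (n : ℕ).factorization p)) *
      (1 - ζ ^ (-((∏ p ∈ I, p ^ (n : ℕ).factorization p : ℕ) : ℤ)))) :
    TotallyPositiveElt ξ ∧
      ∀ σ : E ≃ₐ[ℚ] E,
        IsIntegral ℤ (σ ξ / ξ) ∧ IsIntegral ℤ (σ ξ / ξ)⁻¹ ∧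
          TotallyPositiveElt (σ ξ / ξ) := by
  have hN0 : (0 : ℕ) < (n : ℕ) := n.pos
  have hNne : (n : ℕ) ≠ 0 := hN0.ne'
  have hζn : ζ ^ (n : ℕ) = 1 := hζ.pow_eq_one
  set T := (n : ℕ).primeFactors.powerset.filter (· ≠ (n : ℕ).primeFactors) with hT
  have key : ∀ I ∈ T, 0 < (∏ p ∈ I, p ^ (n : ℕ).factorization p) ∧
      (∏ p ∈ I, p ^ (n : ℕ).factorization p) < (n : ℕ) := by
    intro I hI
    rw [hT, Finset.mem_filter, Finset.mem_powerset] at hI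
    exact aux_nI_pos_lt hNne hI.1 hI.2
  -- rewrite ξ using only natural powers
  have hξ' : ξ = ∏ I ∈ T, (1 - ζ ^ (∏ p ∈ I, p ^ (n : ℕ).factorization p)) *
      (1 - ζ ^ ((n : ℕ) - ∏ p ∈ I, p ^ (n : ℕ).factorization p)) := by
    rw [hξ]
    refine Finset.prod_congr rfl fun I hI => ?_
    obtain ⟨h1, h2⟩ := key I hI
    set a := ∏ p ∈ I, p ^ (n : ℕ).factorization p
    have hmul : ζ ^ a * ζ ^ ((n : ℕ) - a) = 1 := by
      rw [← pow_add, Nat.add_sub_cancel' h2.le, hζn]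
    have : ζ ^ (-(a : ℤ)) = ζ ^ ((n : ℕ) - a) := by
      rw [zpow_neg, zpow_natCast]
      exact inv_eq_of_mul_eq_one_right hmul
    rw [this]
  -- part (a)
  have partA : TotallyPositiveElt ξ := by
    intro φ
    set ω := φ ζ with hω
    have hωprim : IsPrimitiveRoot ω (n : ℕ) := hζ.map_of_injective φ.injective
    have hωn : ω ^ (n : ℕ) = 1 := hωprim.pow_eq_one
    have habs : ‖ω‖ = 1 := Complex.norm_eq_one_of_pow_eq_one hωn hNne
    refine ⟨∏ I ∈ T, Complex.normSq (1 - ω ^ (∏ p ∈ I, p ^ (n : ℕ).factorization p)), ?_, ?_⟩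
    · refine Finset.prod_pos fun I hI => ?_
      obtain ⟨h1, h2⟩ := key I hI
      exact Complex.normSq_pos.mpr
        (sub_ne_zero.mpr (Ne.symm (hωprim.pow_ne_one_of_pos_of_lt h1.ne' h2)))
    · rw [hξ', map_prod]
      push_cast
      refine Finset.prod_congr rfl fun I hI => ?_
      obtain ⟨h1, h2⟩ := key I hI
      set a := ∏ p ∈ I, p ^ (n : ℕ).factorization p
      have hmap : φ ((1 - ζ ^ a) * (1 - ζ ^ ((n : ℕ) - a))) =
          (1 - ω ^ a) * (1 - ω ^ ((n : ℕ) - a)) := by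
        simp [map_mul, map_sub, map_one, map_pow, hω]
      rw [hmap]
      have habsa : ‖ω ^ a‖ = 1 := by rw [norm_pow, habs, one_pow]
      have hmul : ω ^ a * ω ^ ((n : ℕ) - a) = 1 := by
        rw [← pow_add, Nat.add_sub_cancel' h2.le, hωn]
      have hinv : ω ^ ((n : ℕ) - a) = (starRingEnd ℂ) (ω ^ a) := by
        rw [← Complex.inv_eq_conj habsa]
        exact (inv_eq_of_mul_eq_one_right hmul).symm
      rw [hinv, ← map_one (starRingEnd ℂ), ← map_sub, map_one, Complex.mul_conj]
  -- ξ is nonzero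
  have hξne : ξ ≠ 0 := by
    rw [hξ']
    refine Finset.prod_ne_zero_iff.mpr fun I hI => ?_
    obtain ⟨h1, h2⟩ := key I hI
    refine mul_ne_zero (sub_ne_zero.mpr (Ne.symm (hζ.pow_ne_one_of_pos_of_lt h1.ne' h2)))
      (sub_ne_zero.mpr (Ne.symm (hζ.pow_ne_one_of_pos_of_lt ?_ ?_))) <;> omega
  -- main integrality lemma
  have main : ∀ σ : E ≃ₐ[ℚ] E, IsIntegral ℤ (σ ξ / ξ) := by
    intro σ
    have : NeZero (n : ℕ) := ⟨hNne⟩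
    have hσpow : (σ ζ) ^ (n : ℕ) = 1 := by rw [← map_pow, hζn, map_one]
    obtain ⟨k, -, hk⟩ := hζ.eq_pow_of_pow_eq_one hσpow
    -- integrality of the basic quotients
    have B : ∀ b : ℕ, ζ ^ b ≠ 1 → IsIntegral ℤ ((1 - ζ ^ (k * b)) / (1 - ζ ^ b)) := by
      intro b hb
      have hnz : (1 : E) - ζ ^ b ≠ 0 := sub_ne_zero.mpr (Ne.symm hb)
      have h1 : (ζ ^ b) ^ k = ζ ^ (k * b) := by rw [← pow_mul, mul_comm]
      have h2 := geom_sum_mul (ζ ^ b) k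
      rw [h1] at h2
      have hgeom : (1 - ζ ^ (k * b)) =
          (∑ i ∈ Finset.range k, (ζ ^ b) ^ i) * (1 - ζ ^ b) := by
        linear_combination h2
      rw [hgeom, mul_div_cancel_right₀ _ hnz]
      exact IsIntegral.sum _ fun i _ => ((hζ.isIntegral hN0).pow b).pow i
    have hσξ : σ ξ = ∏ I ∈ T, (1 - ζ ^ (k * (∏ p ∈ I, p ^ (n : ℕ).factorization p))) *
        (1 - ζ ^ (k * ((n : ℕ) - ∏ p ∈ I, p ^ (n : ℕ).factorization p))) := by
      rw [hξ', map_prod]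
      refine Finset.prod_congr rfl fun I hI => ?_
      simp only [map_mul, map_sub, map_one, map_pow, ← hk, ← pow_mul]
    rw [hσξ, hξ', ← Finset.prod_div_distrib]
    refine IsIntegral.prod _ fun I hI => ?_
    obtain ⟨h1, h2⟩ := key I hI
    rw [← div_mul_div_comm]
    refine (B _ (hζ.pow_ne_one_of_pos_of_lt h1.ne' h2)).mul
      (B _ (hζ.pow_ne_one_of_pos_of_lt ?_ ?_)) <;> omega
  refine ⟨partA, fun σ => ⟨main σ, ?_, ?_⟩⟩
  · -- the inverse is integral
    have hrw : (σ ξ / ξ)⁻¹ = σ (σ.symm ξ / ξ) := by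
      rw [map_div₀, AlgEquiv.apply_symm_apply, inv_div]
    rw [hrw]
    exact IsIntegral.map (σ.toAlgHom.restrictScalars ℤ) (main σ.symm)
  · -- total positivity of σ ξ / ξ
    intro φ
    obtain ⟨r₁, hr₁, he₁⟩ := partA (φ.comp σ.toAlgHom.toRingHom)
    obtain ⟨r₂, hr₂, he₂⟩ := partA φ
    refine ⟨r₁ / r₂, div_pos hr₁ hr₂, ?_⟩
    rw [map_div₀]
    have : φ (σ ξ) = (φ.comp σ.toAlgHom.toRingHom) ξ := rfl
    rw [this, he₁, he₂]
    push_cast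
    ring
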